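/- Fix a finite set P of predicate symbols (with finite arities) and a finite set C of constants, and a natural number k. Up to logical equivalence, there are only finitely many existentially closed conjunctions of atoms over P and C whose connected width is at most k (i.e., every connected component contains at most k atoms that mention a variable). -/

import Mathlib

/-- A relational atom over predicates `P`, variables `V` and constants `C`. -/
structure Atom (P V C : Type*) where
  pred : P
  args : List (V ⊕ C)
deriving DecidableEq

/-- The variables occurring in an atom. -/
def Atom.vars {P V C : Type*} (a : Atom P V C) : Set V := {v | Sum.inl v ∈ a.args}

/-- The variables occurring in a finite conjunction of atoms. -/
def varsFS {P V C : Type*} (F : Finset (Atom P V C)) : Set V :=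
  {v | ∃ a ∈ F, v ∈ a.vars}

/-- Connectivity of variables in the variable-hypergraph of `F`. -/
def connR {P V C : Type*} (F : Finset (Atom P V C)) : V → V → Prop :=
  Relation.ReflTransGen (fun u v : V => ∃ a ∈ F, u ∈ a.vars ∧ v ∈ a.vars)

/-- A first-order structure for the signature. -/
structure Interp (P C : Type*) where
  Dom : Type
  nonempty : Nonempty Dom
  rel : P → List Dom → Prop
  const : C → Dom

/-- Satisfaction of an atom under a variable assignment. -/
def Interp.holdsAtom {P C V : Type*} (M : Interp P C) (σ : V → M.Dom)
    (a : Atom P V C) : Prop :=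
  M.rel a.pred (a.args.map (Sum.elim σ M.const))

/-- Satisfaction of the existential closure of a conjunction of atoms. -/
def Interp.satCQ {P C V : Type*} (M : Interp P C) (F : Finset (Atom P V C)) : Prop :=
  ∃ σ : V → M.Dom, ∀ a ∈ F, M.holdsAtom σ a

/-- Logical equivalence of two existentially closed conjunctions of atoms. -/
def equivCQ {P V C : Type*} (F G : Finset (Atom P V C)) : Prop :=
  ∀ M : Interp P C, M.satCQ F ↔ M.satCQ G

noncomputable section CQAux

open scoped Classical

namespace CQAux
set_option linter.unusedSectionVars false

variable {P C : Type} [Fintype P] [DecidableEq P] [Fintype C] [DecidableEq C]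

/-- Variables of an atom as a finset. -/
def avars (a : Atom P ℕ C) : Finset ℕ := (a.args.filterMap fun x => x.getLeft?).toFinset

lemma mem_avars {a : Atom P ℕ C} {v : ℕ} : v ∈ avars a ↔ v ∈ a.vars := by
  simp [avars, Atom.vars, List.mem_filterMap]

lemma avars_card_le (a : Atom P ℕ C) : (avars a).card ≤ a.args.length := by
  classical
  unfold avars
  calc (a.args.filterMap fun x => x.getLeft?).toFinset.card
      ≤ (a.args.filterMap fun x => x.getLeft?).length := List.toFinset_card_le _
    _ ≤ a.args.length := List.length_filterMap_le _ _

/-- Variables of a conjunction as a finset. -/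
def fvars (F : Finset (Atom P ℕ C)) : Finset ℕ := F.biUnion avars

lemma mem_fvars {F : Finset (Atom P ℕ C)} {v : ℕ} : v ∈ fvars F ↔ v ∈ varsFS F := by
  simp [fvars, varsFS, mem_avars]

lemma holds_congr (M : Interp P C) {σ σ' : ℕ → M.Dom} {a : Atom P ℕ C}
    (h : ∀ v ∈ a.vars, σ v = σ' v) : M.holdsAtom σ a ↔ M.holdsAtom σ' a := by
  unfold Interp.holdsAtom
  have : a.args.map (Sum.elim σ M.const) = a.args.map (Sum.elim σ' M.const) := by
    apply List.map_congr_left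
    rintro (v | c) hx
    · exact h v hx
    · rfl
  rw [this]

/-- Renaming variables in an atom. -/
def mapAtom (ρ : ℕ → ℕ) (a : Atom P ℕ C) : Atom P ℕ C :=
  ⟨a.pred, a.args.map (Sum.map ρ id)⟩

lemma holds_mapAtom (M : Interp P C) (σ : ℕ → M.Dom) (ρ : ℕ → ℕ) (a : Atom P ℕ C) :
    M.holdsAtom σ (mapAtom ρ a) ↔ M.holdsAtom (σ ∘ ρ) a := by
  simp [Interp.holdsAtom, mapAtom, List.map_map, Function.comp_def, Sum.elim_map]

lemma mem_vars_mapAtom {ρ : ℕ → ℕ} {a : Atom P ℕ C} {v : ℕ} :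
    v ∈ (mapAtom ρ a).vars ↔ ∃ u ∈ a.vars, ρ u = v := by
  simp only [mapAtom, Atom.vars, Set.mem_setOf_eq, List.mem_map]
  constructor
  · rintro ⟨(u | c), hx, hux⟩
    · exact ⟨u, hx, by simpa using hux⟩
    · simp [Sum.map] at hux
  · rintro ⟨u, hu, rfl⟩
    exact ⟨Sum.inl u, hu, rfl⟩

lemma satCQ_mono (M : Interp P C) {F G : Finset (Atom P ℕ C)} (h : G ⊆ F) :
    M.satCQ F → M.satCQ G := fun ⟨σ, hσ⟩ => ⟨σ, fun a ha => hσ a (h ha)⟩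

lemma satCQ_image (M : Interp P C) (F : Finset (Atom P ℕ C)) (ρ : ℕ → ℕ)
    (hinj : ∀ u ∈ fvars F, ∀ v ∈ fvars F, ρ u = ρ v → u = v) :
    M.satCQ (F.image (mapAtom ρ)) ↔ M.satCQ F := by
  constructor
  · rintro ⟨σ, hσ⟩
    refine ⟨σ ∘ ρ, fun a ha => ?_⟩
    rw [← holds_mapAtom]
    exact hσ _ (Finset.mem_image_of_mem _ ha)
  · rintro ⟨σ, hσ⟩
    obtain ⟨d⟩ := M.nonempty
    refine ⟨fun w => if h : ∃ v ∈ fvars F, ρ v = w then σ h.choose else d, ?_⟩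
    intro b hb
    obtain ⟨a, ha, rfl⟩ := Finset.mem_image.1 hb
    rw [holds_mapAtom]
    rw [holds_congr M (σ' := σ)]
    · exact hσ a ha
    · intro v hv
      have hvF : v ∈ fvars F := mem_fvars.2 ⟨a, ha, hv⟩
      have hex : ∃ u ∈ fvars F, ρ u = ρ v := ⟨v, hvF, rfl⟩
      simp only [Function.comp, hex, dif_pos]
      have h1 := hex.choose_spec
      have : hex.choose = v := hinj _ h1.1 _ hvF h1.2
      rw [this]

/-- Gluing lemma: if each variable can be assigned a satisfiable "part"
containing all atoms it occurs in, consistently across each atom, then the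
whole conjunction is satisfiable. -/
lemma satCQ_glue (M : Interp P C) (F : Finset (Atom P ℕ C)) (c : ℕ → Finset (Atom P ℕ C))
    (hc1 : ∀ a ∈ F, ∀ v ∈ a.vars, a ∈ c v)
    (hc2 : ∀ a ∈ F, ∀ u ∈ a.vars, ∀ v ∈ a.vars, c u = c v)
    (hc3 : ∀ v ∈ varsFS F, M.satCQ (c v))
    (hg : ∀ a ∈ F, avars a = ∅ → ∃ σ, M.holdsAtom σ a) :
    M.satCQ F := by
  obtain ⟨d⟩ := M.nonempty
  set τ : Finset (Atom P ℕ C) → (ℕ → M.Dom) :=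
    fun s => if h : M.satCQ s then h.choose else fun _ => d with hτ
  refine ⟨fun v => τ (c v) v, fun a ha => ?_⟩
  by_cases hav : avars a = ∅
  · obtain ⟨σ, hσ⟩ := hg a ha hav
    rw [holds_congr M (σ' := σ)]
    · exact hσ
    · intro v hv
      exact absurd (mem_avars.2 hv) (by simp [hav])
  · obtain ⟨v0, hv0⟩ := Finset.nonempty_iff_ne_empty.2 hav
    have hv0' : v0 ∈ a.vars := mem_avars.1 hv0
    have hs : M.satCQ (c v0) := hc3 v0 ⟨a, ha, hv0'⟩
    rw [holds_congr M (σ' := τ (c v0))]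
    · have : τ (c v0) = hs.choose := by simp [hτ, dif_pos hs]
      rw [this]
      exact hs.choose_spec a (hc1 a ha v0 hv0')
    · intro v hv
      rw [hc2 a ha v hv v0 hv0']

/-- The connected component (as a set of atoms) of variable `v`. -/
def comp (F : Finset (Atom P ℕ C)) (v : ℕ) : Finset (Atom P ℕ C) :=
  F.filter (fun b => ∃ u ∈ b.vars, connR F v u)

/-- The set of connected components of `F`. -/
def comps (F : Finset (Atom P ℕ C)) : Finset (Finset (Atom P ℕ C)) :=
  (fvars F).image (comp F)

lemma connR_symm {F : Finset (Atom P ℕ C)} {u v : ℕ} (h : connR F u v) : connR F v u := by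
  induction h with
  | refl => exact Relation.ReflTransGen.refl
  | tail _ hstep ih =>
      refine Relation.ReflTransGen.trans ?_ ih
      obtain ⟨a, ha, h1, h2⟩ := hstep
      exact Relation.ReflTransGen.single ⟨a, ha, h2, h1⟩

lemma comp_eq_of_connR {F : Finset (Atom P ℕ C)} {u v : ℕ} (h : connR F u v) :
    comp F u = comp F v := by
  unfold comp
  apply Finset.filter_congr
  intro b _
  constructor
  · rintro ⟨w, hw, hc⟩
    exact ⟨w, hw, Relation.ReflTransGen.trans (connR_symm h) hc⟩
  · rintro ⟨w, hw, hc⟩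
    exact ⟨w, hw, Relation.ReflTransGen.trans h hc⟩

lemma mem_comp_self {F : Finset (Atom P ℕ C)} {a : Atom P ℕ C} {v : ℕ}
    (ha : a ∈ F) (hv : v ∈ a.vars) : a ∈ comp F v :=
  Finset.mem_filter.2 ⟨ha, v, hv, Relation.ReflTransGen.refl⟩

lemma connR_of_mem {F : Finset (Atom P ℕ C)} {a : Atom P ℕ C} {u v : ℕ}
    (ha : a ∈ F) (hu : u ∈ a.vars) (hv : v ∈ a.vars) : connR F u v :=
  Relation.ReflTransGen.single ⟨a, ha, hu, hv⟩

lemma comp_subset {F : Finset (Atom P ℕ C)} {v : ℕ} : comp F v ⊆ F :=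
  Finset.filter_subset _ _

/-- Decomposition of satisfaction into ground part and connected components. -/
lemma satCQ_decomp (M : Interp P C) (F : Finset (Atom P ℕ C)) :
    M.satCQ F ↔
      (M.satCQ (F.filter fun a => avars a = ∅) ∧ ∀ G ∈ comps F, M.satCQ G) := by
  constructor
  · intro h
    refine ⟨satCQ_mono M (Finset.filter_subset _ _) h, fun G hG => ?_⟩
    obtain ⟨v, _, rfl⟩ := Finset.mem_image.1 hG
    exact satCQ_mono M comp_subset h
  · rintro ⟨hground, hcomps⟩
    refine satCQ_glue M F (comp F) ?_ ?_ ?_ ?_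
    · intro a ha v hv
      exact mem_comp_self ha hv
    · intro a ha u hu v hv
      exact comp_eq_of_connR (connR_of_mem ha hu hv)
    · intro v hv
      refine hcomps _ (Finset.mem_image.2 ⟨v, ?_, rfl⟩)
      exact mem_fvars.2 hv
    · intro a ha hav
      obtain ⟨σ, hσ⟩ := hground
      exact ⟨σ, hσ a (Finset.mem_filter.2 ⟨ha, hav⟩)⟩

/-- Disjoint assembly: satisfaction of a ground part together with
variable-disjoint pieces. -/
lemma satCQ_assemble (M : Interp P C) (g : Finset (Atom P ℕ C))
    (S : Finset (Finset (Atom P ℕ C))) (r : Finset (Atom P ℕ C) → Finset (Atom P ℕ C))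
    (hng : ∀ a ∈ g, avars a = ∅)
    (hdisj : ∀ H ∈ S, ∀ H' ∈ S, H ≠ H' → ∀ v ∈ fvars (r H), v ∉ fvars (r H')) :
    M.satCQ (g ∪ S.biUnion r) ↔ (M.satCQ g ∧ ∀ H ∈ S, M.satCQ (r H)) := by
  constructor
  · intro h
    refine ⟨satCQ_mono M Finset.subset_union_left h, fun H hH => ?_⟩
    refine satCQ_mono M ?_ h
    exact (Finset.subset_biUnion_of_mem r hH).trans Finset.subset_union_right
  · rintro ⟨hg, hS⟩
    set c : ℕ → Finset (Atom P ℕ C) := fun v =>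
      if h : ∃ H ∈ S, v ∈ fvars (r H) then r h.choose else ∅ with hc
    have key : ∀ H ∈ S, ∀ v ∈ fvars (r H), c v = r H := by
      intro H hH v hv
      have hex : ∃ H' ∈ S, v ∈ fvars (r H') := ⟨H, hH, hv⟩
      have h1 := hex.choose_spec
      have : hex.choose = H := by
        by_contra hne
        exact hdisj _ h1.1 _ hH hne v h1.2 hv
      simp only [hc, dif_pos hex, this]
    have memcase : ∀ a ∈ g ∪ S.biUnion r, ∀ v ∈ a.vars,
        ∃ H ∈ S, a ∈ r H ∧ v ∈ fvars (r H) := by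
      intro a ha v hv
      rcases Finset.mem_union.1 ha with h | h
      · exact absurd (mem_avars.2 hv) (by simp [hng a h])
      · obtain ⟨H, hH, haH⟩ := Finset.mem_biUnion.1 h
        exact ⟨H, hH, haH, Finset.mem_biUnion.2 ⟨a, haH, mem_avars.2 hv⟩⟩
    refine satCQ_glue M _ c ?_ ?_ ?_ ?_
    · intro a ha v hv
      obtain ⟨H, hH, haH, hvH⟩ := memcase a ha v hv
      rw [key H hH v hvH]; exact haH
    · intro a ha u hu v hv
      obtain ⟨H, hH, haH, huH⟩ := memcase a ha u hu
      obtain ⟨H', hH', haH', hvH'⟩ := memcase a ha v hv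
      have : H = H' := by
        by_contra hne
        exact hdisj _ hH _ hH' hne _
          (Finset.mem_biUnion.2 ⟨a, haH, mem_avars.2 hv⟩) hvH'
      rw [key H hH u huH, key H' hH' v hvH', this]
    · rintro v ⟨a, ha, hv⟩
      obtain ⟨H, hH, _, hvH⟩ := memcase a ha v hv
      rw [key H hH v hvH]
      exact hS H hH
    · intro a ha hav
      rcases Finset.mem_union.1 ha with h | h
      · obtain ⟨σ, hσ⟩ := hg
        exact ⟨σ, hσ a h⟩
      · obtain ⟨H, hH, haH⟩ := Finset.mem_biUnion.1 h
        obtain ⟨σ, hσ⟩ := hS H hH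
        exact ⟨σ, hσ a haH⟩

lemma list_lift {N : ℕ} (l : List (ℕ ⊕ C)) (h : ∀ v, Sum.inl v ∈ l → v < N) :
    ∃ l' : List (Fin N ⊕ C), l'.map (Sum.map Fin.val id) = l := by
  induction l with
  | nil => exact ⟨[], rfl⟩
  | cons x xs ih =>
      obtain ⟨l', hl'⟩ := ih (fun v hv => h v (List.mem_cons_of_mem _ hv))
      cases x with
      | inl v =>
          exact ⟨Sum.inl ⟨v, h v List.mem_cons_self⟩ :: l', by simp [hl']⟩
      | inr c => exact ⟨Sum.inr c :: l', by simp [hl']⟩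

/-- All atoms with prescribed arities and variables below `N`. -/
def canonAtoms (arity : P → ℕ) (N : ℕ) : Finset (Atom P ℕ C) :=
  Finset.univ.biUnion fun p : P =>
    (Finset.univ : Finset (List.Vector (Fin N ⊕ C) (arity p))).image
      fun w => ⟨p, w.toList.map (Sum.map Fin.val id)⟩

lemma mem_canonAtoms_iff {arity : P → ℕ} {N : ℕ} {a : Atom P ℕ C} :
    a ∈ canonAtoms arity N ↔
      (a.args.length = arity a.pred ∧ ∀ v ∈ a.vars, v < N) := by
  constructor
  · intro h
    obtain ⟨p, -, h⟩ := Finset.mem_biUnion.1 h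
    obtain ⟨w, -, rfl⟩ := Finset.mem_image.1 h
    constructor
    · simp [w.toList_length]
    · intro v hv
      simp only [Atom.vars, Set.mem_setOf_eq, List.mem_map] at hv
      obtain ⟨x, -, hx⟩ := hv
      cases x with
      | inl u => simpa using (by simpa using hx : u.val = v) ▸ u.isLt
      | inr c => simp [Sum.map] at hx
  · rintro ⟨hlen, hv⟩
    obtain ⟨l', hl'⟩ := list_lift a.args (fun v hvmem => hv v hvmem)
    have hlen' : l'.length = arity a.pred := by
      rw [← hlen, ← hl', List.length_map]
    refine Finset.mem_biUnion.2 ⟨a.pred, Finset.mem_univ _,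
      Finset.mem_image.2 ⟨⟨l', hlen'⟩, Finset.mem_univ _, ?_⟩⟩
    cases a
    simpa using hl'

/-- Canonical renaming of a finite set of variables into an initial segment. -/
def rho (s : Finset ℕ) (v : ℕ) : ℕ := s.toList.idxOf v

lemma rho_lt {s : Finset ℕ} {v : ℕ} (h : v ∈ s) : rho s v < s.card := by
  rw [rho, ← Finset.length_toList]
  exact List.idxOf_lt_length_iff.2 (Finset.mem_toList.2 h)

lemma rho_injOn {s : Finset ℕ} {u v : ℕ} (hu : u ∈ s) (hv : v ∈ s)
    (h : rho s u = rho s v) : u = v :=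
  (List.idxOf_inj (Finset.mem_toList.2 hu)).1 h

lemma mem_fvars_image {s : Finset (Atom P ℕ C)} {ρ : ℕ → ℕ} {v : ℕ} :
    v ∈ fvars (s.image (mapAtom ρ)) ↔ ∃ u ∈ fvars s, ρ u = v := by
  simp only [fvars, Finset.mem_biUnion, Finset.mem_image]
  constructor
  · rintro ⟨b, ⟨a, ha, rfl⟩, hb⟩
    obtain ⟨u, hu, rfl⟩ := mem_vars_mapAtom.1 (mem_avars.1 hb)
    exact ⟨u, ⟨a, ha, mem_avars.2 hu⟩, rfl⟩
  · rintro ⟨u, ⟨a, ha, hu⟩, rfl⟩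
    exact ⟨mapAtom ρ a, ⟨a, ha, rfl⟩,
      mem_avars.2 (mem_vars_mapAtom.2 ⟨u, mem_avars.1 hu, rfl⟩)⟩

/-- Canonical form of a conjunction: rename its variables to an initial segment. -/
def canon (s : Finset (Atom P ℕ C)) : Finset (Atom P ℕ C) :=
  s.image (mapAtom (rho (fvars s)))

lemma satCQ_canon (M : Interp P C) (s : Finset (Atom P ℕ C)) :
    M.satCQ (canon s) ↔ M.satCQ s :=
  satCQ_image M s _ (fun u hu v hv h => rho_injOn hu hv h)

lemma canon_mem_powerset {arity : P → ℕ} {N : ℕ} {s : Finset (Atom P ℕ C)}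
    (hlen : ∀ a ∈ s, a.args.length = arity a.pred)
    (hcard : (fvars s).card ≤ N) :
    canon s ∈ (canonAtoms arity N).powerset := by
  refine Finset.mem_powerset.2 (fun b hb => ?_)
  obtain ⟨a, ha, rfl⟩ := Finset.mem_image.1 hb
  refine mem_canonAtoms_iff.2 ⟨?_, ?_⟩
  · simpa [mapAtom] using hlen a ha
  · intro v hv
    obtain ⟨u, hu, rfl⟩ := mem_vars_mapAtom.1 hv
    have : u ∈ fvars s := Finset.mem_biUnion.2 ⟨a, ha, mem_avars.2 hu⟩
    exact lt_of_lt_of_le (rho_lt this) hcard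

section Placement

variable (arity : P → ℕ) (N : ℕ)

/-- Index of a canonical component in the list of all of them. -/
def idx (H : Finset (Atom P ℕ C)) : ℕ :=
  ((canonAtoms arity N).powerset.toList).idxOf H

/-- Shifted copy of a canonical component, placed on its own block of variables. -/
def repAt (H : Finset (Atom P ℕ C)) : Finset (Atom P ℕ C) :=
  H.image (mapAtom (fun v => N * idx arity N H + v))

lemma satCQ_repAt (M : Interp P C) (H : Finset (Atom P ℕ C)) :
    M.satCQ (repAt arity N H) ↔ M.satCQ H :=
  satCQ_image M H _ (fun u _ v _ h => by omega)

lemma fvars_repAt {H : Finset (Atom P ℕ C)}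
    (hH : H ∈ (canonAtoms arity N).powerset) {v : ℕ}
    (hv : v ∈ fvars (repAt arity N H)) :
    N * idx arity N H ≤ v ∧ v < N * idx arity N H + N := by
  obtain ⟨u, hu, rfl⟩ := mem_fvars_image.1 hv
  obtain ⟨a, ha, hua⟩ := Finset.mem_biUnion.1 hu
  have := (mem_canonAtoms_iff.1 (Finset.mem_powerset.1 hH ha)).2 u (mem_avars.1 hua)
  omega

lemma repAt_disjoint {H H' : Finset (Atom P ℕ C)}
    (hH : H ∈ (canonAtoms arity N).powerset) (hH' : H' ∈ (canonAtoms arity N).powerset)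
    (hne : H ≠ H') {v : ℕ} (hv : v ∈ fvars (repAt arity N H)) :
    v ∉ fvars (repAt arity N H') := by
  intro hv'
  have h1 := fvars_repAt arity N hH hv
  have h2 := fvars_repAt arity N hH' hv'
  have hNpos : 0 < N := by omega
  have : idx arity N H = idx arity N H' := by
    rcases Nat.lt_trichotomy (idx arity N H) (idx arity N H') with h | h | h
    · have := Nat.mul_le_mul_left N h
      rw [Nat.mul_succ] at this
      omega
    · exact h
    · have := Nat.mul_le_mul_left N h
      rw [Nat.mul_succ] at this
      omega
  exact hne ((List.idxOf_inj (Finset.mem_toList.2 hH)).1 this)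

end Placement

end CQAux

end CQAux

/-- over a finite set of predicates (with finite arities) and a
finite set of constants, there are, up to logical equivalence, only finitely
many existentially closed conjunctions of atoms whose connected width is at
most `k` (every connected component contains at most `k` atoms mentioning a
variable). -/
theorem stmt6 {P C : Type} [Fintype P] [DecidableEq P] [Fintype C] [DecidableEq C]
    (arity : P → ℕ) (k : ℕ) :
    ∃ L : Finset (Finset (Atom P ℕ C)),
      ∀ F : Finset (Atom P ℕ C),
        (∀ a ∈ F, a.args.length = arity a.pred) →
        (∀ v ∈ varsFS F,
          Set.ncard {b : Atom P ℕ C | b ∈ F ∧ ∃ u ∈ b.vars, connR F v u} ≤ k) →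
        ∃ G ∈ L, equivCQ F G := by
  classical
  open CQAux in
  set A := Finset.univ.sup arity with hA
  set N := k * A with hN
  set CA := (canonAtoms arity N : Finset (Atom P ℕ C)) with hCA
  refine ⟨(CA.powerset ×ˢ CA.powerset.powerset).image
    (fun x => x.1 ∪ x.2.biUnion (repAt arity N)), ?_⟩
  intro F hlen hwidth
  set g := F.filter (fun a => avars a = ∅) with hg
  set S := (comps F).image canon with hS
  have harityA : ∀ a ∈ F, (avars a).card ≤ A := by
    intro a ha
    calc (avars a).card ≤ a.args.length := avars_card_le a
      _ = arity a.pred := hlen a ha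
      _ ≤ A := Finset.le_sup (Finset.mem_univ _)
  have hgmem : g ∈ CA.powerset := by
    refine Finset.mem_powerset.2 (fun a ha => ?_)
    obtain ⟨haF, hav⟩ := Finset.mem_filter.1 ha
    refine mem_canonAtoms_iff.2 ⟨hlen a haF, fun v hv => ?_⟩
    exact absurd (mem_avars.2 hv) (by simp [hav])
  have hcompcard : ∀ v ∈ varsFS F, (comp F v).card ≤ k := by
    intro v hv
    have hset : {b : Atom P ℕ C | b ∈ F ∧ ∃ u ∈ b.vars, connR F v u} = ↑(comp F v) := by
      ext b; simp [comp]
    have := hwidth v hv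
    rwa [hset, Set.ncard_coe_finset] at this
  have hcanonmem : ∀ G ∈ comps F, canon G ∈ CA.powerset := by
    intro G hG
    obtain ⟨v, hv, rfl⟩ := Finset.mem_image.1 hG
    refine canon_mem_powerset (fun a ha => hlen a (comp_subset ha)) ?_
    calc (fvars (comp F v)).card ≤ ∑ a ∈ comp F v, (avars a).card :=
          Finset.card_biUnion_le
      _ ≤ ∑ _a ∈ comp F v, A :=
          Finset.sum_le_sum (fun a ha => harityA a (comp_subset ha))
      _ = (comp F v).card * A := by rw [Finset.sum_const, smul_eq_mul]
      _ ≤ k * A :=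
          Nat.mul_le_mul_right A (hcompcard v (mem_fvars.1 hv))
  have hSmem : S ∈ CA.powerset.powerset := by
    refine Finset.mem_powerset.2 (fun H hH => ?_)
    obtain ⟨G, hG, rfl⟩ := Finset.mem_image.1 hH
    exact hcanonmem G hG
  refine ⟨g ∪ S.biUnion (repAt arity N),
    Finset.mem_image.2 ⟨(g, S), Finset.mem_product.2 ⟨hgmem, hSmem⟩, rfl⟩, ?_⟩
  intro M
  rw [satCQ_decomp M F, satCQ_assemble M g S (repAt arity N)
    (fun a ha => (Finset.mem_filter.1 ha).2)
    (fun H hH H' hH' hne v hv =>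
      repAt_disjoint arity N (Finset.mem_powerset.1 hSmem hH)
        (Finset.mem_powerset.1 hSmem hH') hne hv)]
  refine and_congr_right (fun _ => ?_)
  constructor
  · intro h H hH
    obtain ⟨G, hG, rfl⟩ := Finset.mem_image.1 hH
    rw [satCQ_repAt, satCQ_canon]
    exact h G hG
  · intro h G hG
    have := h (canon G) (Finset.mem_image_of_mem _ hG)
    rwa [satCQ_repAt, satCQ_canon] at this
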